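/- Let n ≥ 6, I ⊆ [n], v : I → [n] injective, c : I → [n] with c(i) ≠ v(i) for all i ∈ I, and let i ≠ j ∈ I with c(i) ≠ c(j). Then (n−4)(n−5)·|S_i ∩ S_j| ≤ A(n,|I|), where S_i (resp. S_j) is the set of permutations σ of [n] avoiding v on I with σ(i) = c(i) (resp. σ(j) = c(j)), and A(n,|I|) is the number of permutations of [n] avoiding v on I. -/

import Mathlib

open Finset

/-- `(n−4)(n−5) |S_i ∩ S_j| ≤ A(n,|I|)` for distinct `i j ∈ I` with `c i ≠ c j`. -/
theorem stmt_7 (n : ℕ) (hn : 6 ≤ n) (I : Finset (Fin n)) (v c : Fin n → Fin n)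
    (hv : Set.InjOn v I) (hc : ∀ k ∈ I, c k ≠ v k) (i j : Fin n)
    (hi : i ∈ I) (hj : j ∈ I) (hij : i ≠ j) (hcij : c i ≠ c j) :
    (n - 4) * (n - 5) *
        ((Finset.univ.filter
            (fun σ : Equiv.Perm (Fin n) =>
              (∀ k ∈ I, σ k ≠ v k) ∧ σ i = c i ∧ σ j = c j)).card) ≤
      (Finset.univ.filter
          (fun σ : Equiv.Perm (Fin n) => ∀ k ∈ I, σ k ≠ v k)).card := by
  classical
  set S : Finset (Equiv.Perm (Fin n)) :=
    Finset.univ.filter (fun σ : Equiv.Perm (Fin n) =>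
      (∀ k ∈ I, σ k ≠ v k) ∧ σ i = c i ∧ σ j = c j) with hS
  set A : Finset (Equiv.Perm (Fin n)) :=
    Finset.univ.filter (fun σ : Equiv.Perm (Fin n) => ∀ k ∈ I, σ k ≠ v k) with hA
  set bad1 : Equiv.Perm (Fin n) → Finset (Fin n) := fun σ =>
    insert i (insert j (insert (σ⁻¹ (v i)) (I.filter fun k => v k = c i))) with hbad1
  set bad2 : Equiv.Perm (Fin n) → Fin n → Finset (Fin n) := fun σ ℓ₁ =>
    insert i (insert j (insert ℓ₁ (insert (σ⁻¹ (v j))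
      (I.filter fun k => v k = c j)))) with hbad2
  set T : Finset ((_ : Equiv.Perm (Fin n)) × (_ : Fin n) × Fin n) :=
    S.sigma (fun σ => (univ \ bad1 σ).sigma (fun ℓ₁ => univ \ bad2 σ ℓ₁)) with hT
  set F : ((_ : Equiv.Perm (Fin n)) × (_ : Fin n) × Fin n) → Equiv.Perm (Fin n) :=
    fun p => p.1 * Equiv.swap i p.2.1 * Equiv.swap j p.2.2 with hF
  -- basic facts extracted from membership in T
  have hmem : ∀ p ∈ T, p.1 ∈ S ∧ p.2.1 ∉ bad1 p.1 ∧ p.2.2 ∉ bad2 p.1 p.2.1 := by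
    intro p hp
    obtain ⟨σ, ℓ₁, ℓ₂⟩ := p
    simp only [hT, Finset.mem_sigma, Finset.mem_sdiff, Finset.mem_univ, true_and] at hp
    exact hp
  have hfilter1 : ∀ k, k ∈ I.filter (fun k => v k = c i) ↔ k ∈ I ∧ v k = c i := by
    intro k; simp [Finset.mem_filter]
  -- unpack bad set non-membership
  have hunpack : ∀ p ∈ T,
      p.2.1 ≠ i ∧ p.2.1 ≠ j ∧ p.1 p.2.1 ≠ v i ∧ (p.2.1 ∈ I → v p.2.1 ≠ c i) ∧
      p.2.2 ≠ i ∧ p.2.2 ≠ j ∧ p.2.2 ≠ p.2.1 ∧ p.1 p.2.2 ≠ v j ∧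
      (p.2.2 ∈ I → v p.2.2 ≠ c j) := by
    intro p hp
    obtain ⟨hpS, h1, h2⟩ := hmem p hp
    rw [hbad1] at h1
    rw [hbad2] at h2
    simp only [Finset.mem_insert, Finset.mem_filter, not_or, not_and] at h1 h2
    obtain ⟨a1, a2, a3, a4⟩ := h1
    obtain ⟨b1, b2, b3, b4, b5⟩ := h2
    refine ⟨a1, a2, ?_, a4, b1, b2, b3, ?_, b5⟩
    · intro h; exact a3 (by rw [← h, Equiv.Perm.inv_def, Equiv.symm_apply_apply])
    · intro h; exact b4 (by rw [← h, Equiv.Perm.inv_def, Equiv.symm_apply_apply])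
  have hSfact : ∀ σ ∈ S, (∀ k ∈ I, σ k ≠ v k) ∧ σ i = c i ∧ σ j = c j := by
    intro σ hσ; rw [hS, Finset.mem_filter] at hσ; exact hσ.2
  -- key computations of F p at special points
  have hFl1 : ∀ p ∈ T, F p p.2.1 = c i := by
    intro p hp
    obtain ⟨a1, a2, _, _, _, _, b3, _, _⟩ := hunpack p hp
    obtain ⟨_, hσi, _⟩ := hSfact p.1 (hmem p hp).1
    rw [hF]
    simp only [Equiv.Perm.mul_apply]
    rw [Equiv.swap_apply_of_ne_of_ne a2 (Ne.symm b3), Equiv.swap_apply_right, hσi]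
  have hFl2 : ∀ p ∈ T, F p p.2.2 = c j := by
    intro p hp
    obtain ⟨_, a2, _, _, b1, _, b3, _, _⟩ := hunpack p hp
    obtain ⟨_, _, hσj⟩ := hSfact p.1 (hmem p hp).1
    rw [hF]
    simp only [Equiv.Perm.mul_apply]
    rw [Equiv.swap_apply_right, Equiv.swap_apply_of_ne_of_ne hij.symm (Ne.symm a2), hσj]
  -- F maps T into A
  have hmaps : ∀ p ∈ T, F p ∈ A := by
    intro p hp
    obtain ⟨a1, a2, a3, a4, b1, b2, b3, b4, b5⟩ := hunpack p hp
    obtain ⟨havoid, hσi, hσj⟩ := hSfact p.1 (hmem p hp).1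
    rw [hA, Finset.mem_filter]
    refine ⟨Finset.mem_univ _, ?_⟩
    intro k hk
    by_cases hk1 : k = p.2.1
    · subst hk1; rw [hFl1 p hp]; exact fun h => a4 hk h.symm
    by_cases hk2 : k = p.2.2
    · subst hk2; rw [hFl2 p hp]; exact fun h => b5 hk h.symm
    by_cases hki : k = i
    · subst hki
      rw [hF]
      simp only [Equiv.Perm.mul_apply]
      rw [Equiv.swap_apply_of_ne_of_ne hij (Ne.symm b1), Equiv.swap_apply_left]
      exact a3
    by_cases hkj : k = j
    · subst hkj
      rw [hF]
      simp only [Equiv.Perm.mul_apply]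
      rw [Equiv.swap_apply_left, Equiv.swap_apply_of_ne_of_ne b1 b3]
      exact b4
    · rw [hF]
      simp only [Equiv.Perm.mul_apply]
      rw [Equiv.swap_apply_of_ne_of_ne hkj hk2, Equiv.swap_apply_of_ne_of_ne hki hk1]
      exact havoid k hk
  -- F is injective on T
  have hinj : Set.InjOn F T := by
    intro p hp q hq hpq
    have h1 : p.2.1 = q.2.1 := by
      have e1 : F p p.2.1 = c i := hFl1 p hp
      have e2 : F q q.2.1 = c i := hFl1 q hq
      rw [hpq] at e1
      exact (F q).injective (e1.trans e2.symm)
    have h2 : p.2.2 = q.2.2 := by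
      have e1 : F p p.2.2 = c j := hFl2 p hp
      have e2 : F q q.2.2 = c j := hFl2 q hq
      rw [hpq] at e1
      exact (F q).injective (e1.trans e2.symm)
    have h3 : p.1 = q.1 := by
      have := hpq
      rw [hF] at this
      simp only [h1, h2] at this
      exact mul_right_cancel (mul_right_cancel this)
    obtain ⟨σ, ℓ₁, ℓ₂⟩ := p
    obtain ⟨σ', ℓ₁', ℓ₂'⟩ := q
    simp only at h1 h2 h3
    subst h1; subst h2; subst h3; rfl
  -- cardinality bounds of bad sets
  have hbad1card : ∀ σ : Equiv.Perm (Fin n), (bad1 σ).card ≤ 4 := by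
    intro σ
    rw [hbad1]
    have hf : (I.filter fun k => v k = c i).card ≤ 1 := by
      rw [Finset.card_le_one]
      intro a ha b hb
      rw [Finset.mem_filter] at ha hb
      exact hv ha.1 hb.1 (ha.2.trans hb.2.symm)
    calc (insert i (insert j (insert (σ⁻¹ (v i)) (I.filter fun k => v k = c i)))).card
        ≤ (insert j (insert (σ⁻¹ (v i)) (I.filter fun k => v k = c i))).card + 1 :=
          Finset.card_insert_le _ _
      _ ≤ (insert (σ⁻¹ (v i)) (I.filter fun k => v k = c i)).card + 1 + 1 :=
          Nat.add_le_add_right (Finset.card_insert_le _ _) 1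
      _ ≤ (I.filter fun k => v k = c i).card + 1 + 1 + 1 := by
          exact Nat.add_le_add_right (Nat.add_le_add_right (Finset.card_insert_le _ _) 1) 1
      _ ≤ 4 := by omega
  have hbad2card : ∀ (σ : Equiv.Perm (Fin n)) (ℓ₁ : Fin n), (bad2 σ ℓ₁).card ≤ 5 := by
    intro σ ℓ₁
    rw [hbad2]
    have hf : (I.filter fun k => v k = c j).card ≤ 1 := by
      rw [Finset.card_le_one]
      intro a ha b hb
      rw [Finset.mem_filter] at ha hb
      exact hv ha.1 hb.1 (ha.2.trans hb.2.symm)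
    calc (insert i (insert j (insert ℓ₁ (insert (σ⁻¹ (v j))
          (I.filter fun k => v k = c j))))).card
        ≤ (insert j (insert ℓ₁ (insert (σ⁻¹ (v j))
          (I.filter fun k => v k = c j)))).card + 1 := Finset.card_insert_le _ _
      _ ≤ (insert ℓ₁ (insert (σ⁻¹ (v j)) (I.filter fun k => v k = c j))).card + 1 + 1 :=
          Nat.add_le_add_right (Finset.card_insert_le _ _) 1
      _ ≤ (insert (σ⁻¹ (v j)) (I.filter fun k => v k = c j)).card + 1 + 1 + 1 :=
          Nat.add_le_add_right (Nat.add_le_add_right (Finset.card_insert_le _ _) 1) 1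
      _ ≤ (I.filter fun k => v k = c j).card + 1 + 1 + 1 + 1 :=
          Nat.add_le_add_right (Nat.add_le_add_right (Nat.add_le_add_right
            (Finset.card_insert_le _ _) 1) 1) 1
      _ ≤ 5 := by omega
  have huniv : (Finset.univ : Finset (Fin n)).card = n := by simp
  have hsd1 : ∀ σ, n - 4 ≤ (univ \ bad1 σ).card := by
    intro σ
    rw [Finset.card_sdiff_of_subset (Finset.subset_univ _), huniv]
    exact Nat.sub_le_sub_left (hbad1card σ) n
  have hsd2 : ∀ σ ℓ₁, n - 5 ≤ (univ \ bad2 σ ℓ₁).card := by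
    intro σ ℓ₁
    rw [Finset.card_sdiff_of_subset (Finset.subset_univ _), huniv]
    exact Nat.sub_le_sub_left (hbad2card σ ℓ₁) n
  -- lower bound on card T
  have hTcard : (n - 4) * (n - 5) * S.card ≤ T.card := by
    rw [hT, Finset.card_sigma]
    calc (n - 4) * (n - 5) * S.card = ∑ _σ ∈ S, (n - 4) * (n - 5) := by
          rw [Finset.sum_const, smul_eq_mul, mul_comm]
      _ ≤ ∑ σ ∈ S, ((univ \ bad1 σ).sigma fun ℓ₁ => univ \ bad2 σ ℓ₁).card := by
          apply Finset.sum_le_sum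
          intro σ _
          rw [Finset.card_sigma]
          calc (n - 4) * (n - 5) ≤ (univ \ bad1 σ).card * (n - 5) :=
                Nat.mul_le_mul_right _ (hsd1 σ)
            _ = ∑ _ℓ₁ ∈ univ \ bad1 σ, (n - 5) := by
                rw [Finset.sum_const, smul_eq_mul]
            _ ≤ ∑ ℓ₁ ∈ univ \ bad1 σ, (univ \ bad2 σ ℓ₁).card :=
                Finset.sum_le_sum fun ℓ₁ _ => hsd2 σ ℓ₁
  -- conclude
  calc (n - 4) * (n - 5) * S.card ≤ T.card := hTcard
    _ ≤ A.card := Finset.card_le_card_of_injOn F hmaps hinj
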